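/- Let A be an n×n complex normal invertible matrix, let 1 ≤ m ≤ n−1, let r_{k−1} ∈ ℂⁿ, and let r_k be a nonzero GMRES(m) residual of A from r_{k−1} such that the Krylov matrix K(A, r_{k−1}) has full column rank m+1. Then K(Aᴴ, r_k)ᴴ r_{k−1} = ‖r_k‖² e₁, where K(Aᴴ, r_k) is the n×(m+1) Krylov matrix of Aᴴ and r_k, and e₁ = (1,0,…,0)ᵀ ∈ ℂ^{m+1}. -/

import Mathlib

open Polynomial Matrix
open scoped InnerProductSpace

private lemma inner_eq_zero_of_norm_le' {E : Type*} [NormedAddCommGroup E]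
    [InnerProductSpace ℂ E] (x v : E) (h : ∀ t : ℂ, ‖x‖ ≤ ‖x - t • v‖) :
    ⟪x, v⟫_ℂ = 0 := by
  by_cases hv : v = 0
  · simp [hv]
  by_contra hane
  set a : ℂ := ⟪x, v⟫_ℂ with ha
  have hvn : (0:ℝ) < ‖v‖ := norm_pos_iff.mpr hv
  have hS : (0:ℝ) < Complex.normSq a := Complex.normSq_pos.mpr hane
  set t : ℂ := (starRingEnd ℂ) a / ((‖v‖:ℂ)^2) with ht
  have hinner : ⟪x, t • v⟫_ℂ = t * a := by rw [inner_smul_right]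
  have hta : t * a = ((Complex.normSq a / ‖v‖^2 : ℝ) : ℂ) := by
    rw [ht, div_mul_eq_mul_div, mul_comm, Complex.mul_conj]
    push_cast
    ring
  have hnormt : ‖t‖ = ‖a‖ / ‖v‖^2 := by
    rw [ht, norm_div, RCLike.norm_conj, norm_pow, Complex.norm_real, Real.norm_eq_abs, abs_norm]
  have hnt : ‖t • v‖^2 = Complex.normSq a / ‖v‖^2 := by
    rw [norm_smul, mul_pow, hnormt, div_pow, ← Complex.sq_norm]
    field_simp
  have h2 : ‖x - t • v‖^2
      = ‖x‖^2 - 2 * (Complex.normSq a / ‖v‖^2) + Complex.normSq a / ‖v‖^2 := by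
    rw [norm_sub_sq (𝕜 := ℂ), hinner, hta, hnt, RCLike.re_to_complex, Complex.ofReal_re]
  have key2 : ‖x‖^2 ≤ ‖x - t • v‖^2 := pow_le_pow_left₀ (norm_nonneg _) (h t) 2
  rw [h2] at key2
  nlinarith [div_pos hS (pow_pos hvn 2)]

private lemma conj_mulVec_sum' {n : ℕ} (M : Matrix (Fin n) (Fin n) ℂ) (x y : Fin n → ℂ) :
    ∑ i, (starRingEnd ℂ) ((Mᴴ.mulVec x) i) * y i
      = ∑ k, (starRingEnd ℂ) (x k) * (M.mulVec y) k := by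
  simp only [Matrix.mulVec, dotProduct, Matrix.conjTranspose_apply, map_sum, _root_.map_mul,
    Finset.sum_mul, Finset.mul_sum, RingHomCompTriple.comp_apply, Complex.star_def,
    Complex.conj_conj, RingHom.id_apply]
  rw [Finset.sum_comm]
  exact Finset.sum_congr rfl fun j _ => Finset.sum_congr rfl fun i _ => by ring


/-- The Euclidean (ℓ²) norm of a vector in ℂⁿ. -/
noncomputable def enorm' {n : ℕ} (v : Fin n → ℂ) : ℝ :=
  ‖(WithLp.equiv 2 (Fin n → ℂ)).symm v‖

/-- `s` is a GMRES(m) residual of `A` from `r`: there is a polynomial `p` of degree at most `m`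
with `p 0 = 1` such that `s = p(A) r` and `‖s‖ ≤ ‖q(A) r‖` for all admissible `q`. -/
def IsGMRESResidual {n : ℕ} (m : ℕ) (A : Matrix (Fin n) (Fin n) ℂ)
    (r s : Fin n → ℂ) : Prop :=
  ∃ p : ℂ[X], p.natDegree ≤ m ∧ p.eval 0 = 1 ∧ s = (aeval A p).mulVec r ∧
    ∀ q : ℂ[X], q.natDegree ≤ m → q.eval 0 = 1 →
      enorm' s ≤ enorm' ((aeval A q).mulVec r)

/-- The Krylov matrix `K(A, r) = [r, Ar, …, Aᵐ r]`, an `n × (m+1)` matrix. -/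
noncomputable def krylov {n : ℕ} (m : ℕ) (A : Matrix (Fin n) (Fin n) ℂ) (r : Fin n → ℂ) :
    Matrix (Fin n) (Fin (m + 1)) ℂ :=
  Matrix.of fun i j => (A ^ (j : ℕ)).mulVec r i

/-- For a normal invertible `A`, if `r_k` is a nonzero GMRES(m) residual of `A` from `r_{k-1}`
and the Krylov matrix `K(A, r_{k-1})` has full column rank, then
`K(Aᴴ, r_k)ᴴ r_{k-1} = ‖r_k‖² e₁`. -/
theorem krylov_conjTranspose_mulVec_prev_residual {n : ℕ} (m : ℕ) (hm : 1 ≤ m)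
    (hmn : m ≤ n - 1)
    (A : Matrix (Fin n) (Fin n) ℂ) (hnormal : A * Aᴴ = Aᴴ * A) (hA : IsUnit A)
    (rkm1 rk : Fin n → ℂ) (hres : IsGMRESResidual m A rkm1 rk) (hrk : rk ≠ 0)
    (hrank : LinearIndependent ℂ
      (fun j : Fin (m + 1) => fun i : Fin n => krylov m A rkm1 i j)) :
    (krylov m Aᴴ rk)ᴴ.mulVec rkm1 =
      ((enorm' rk : ℂ) ^ 2) • (Pi.single 0 1 : Fin (m + 1) → ℂ) := by
  classical
  obtain ⟨p, hpdeg, hp0, hpk, hmin⟩ := hres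
  set f := (WithLp.equiv 2 (Fin n → ℂ)).symm with hf
  have hip : ∀ x y : Fin n → ℂ, ⟪f x, f y⟫_ℂ = ∑ i, (starRingEnd ℂ) (x i) * y i := by
    intro x y
    simp [PiLp.inner_apply, RCLike.inner_apply, hf]
    exact Finset.sum_congr rfl fun i _ => mul_comm _ _
  -- orthogonality against A^j rkm1 for 1 ≤ j ≤ m
  have horth : ∀ j : ℕ, 1 ≤ j → j ≤ m →
      ⟪f rk, f ((A ^ j).mulVec rkm1)⟫_ℂ = 0 := by
    intro j hj1 hjm
    apply inner_eq_zero_of_norm_le'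
    intro t
    have hq : ((aeval A (p - C t * X ^ j)).mulVec rkm1)
        = rk - t • (A ^ j).mulVec rkm1 := by
      rw [map_sub, Matrix.sub_mulVec, ← hpk]
      congr 1
      rw [_root_.map_mul, aeval_C, aeval_X_pow, Algebra.algebraMap_eq_smul_one,
        smul_mul_assoc, one_mul, Matrix.smul_mulVec]
    have hdq : (p - C t * X ^ j).natDegree ≤ m :=
      le_trans (natDegree_sub_le _ _)
        (max_le hpdeg (le_trans (natDegree_C_mul_X_pow_le t j) hjm))
    have he : (p - C t * X ^ j).eval 0 = 1 := by
      simp [hp0, zero_pow (Nat.one_le_iff_ne_zero.mp hj1)]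
    have hle := hmin _ hdq he
    rw [hq] at hle
    simpa [enorm', hf, WithLp.toLp_sub, WithLp.toLp_smul] using hle
  have hinner_v : ∀ j : ℕ, j ≤ m → j ≠ 0 →
      ∑ i, (starRingEnd ℂ) (rk i) * ((A ^ j).mulVec rkm1) i = 0 := by
    intro j hjm hj0
    rw [← hip]
    exact horth j (Nat.one_le_iff_ne_zero.mpr hj0) hjm
  -- rkm1 - rk is in the span of A^j rkm1, j ≥ 1
  have hdeg1 : (1 - p).natDegree < m + 1 :=
    Nat.lt_succ_of_le (le_trans (natDegree_sub_le _ _) (by simpa using hpdeg))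
  have hc0 : (1 - p).coeff 0 = 0 := by
    have : p.coeff 0 = 1 := by rw [coeff_zero_eq_eval_zero, hp0]
    simp [coeff_sub, this]
  have hsub : rkm1 - rk
      = ∑ j ∈ Finset.range (m+1), (1-p).coeff j • (A ^ j).mulVec rkm1 := by
    have h1 : (aeval A (1 - p)).mulVec rkm1 = rkm1 - rk := by
      rw [map_sub, Matrix.sub_mulVec, _root_.map_one, Matrix.one_mulVec, ← hpk]
    rw [← h1, Polynomial.aeval_eq_sum_range' hdeg1 A]
    have hs : ∀ (s : Finset ℕ) (g : ℕ → Matrix (Fin n) (Fin n) ℂ),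
        (∑ j ∈ s, g j).mulVec rkm1 = ∑ j ∈ s, (g j).mulVec rkm1 := by
      intro s g
      induction s using Finset.cons_induction with
      | empty => simp [Matrix.zero_mulVec]
      | cons a s ha ih => rw [Finset.sum_cons, Matrix.add_mulVec, ih, Finset.sum_cons]
    rw [hs]
    exact Finset.sum_congr rfl fun j _ => by rw [Matrix.smul_mulVec]
  have hkey : ∑ i, (starRingEnd ℂ) (rk i) * (rkm1 i - rk i) = 0 := by
    have h1 : ∀ i, rkm1 i - rk i
        = ∑ j ∈ Finset.range (m+1), (1-p).coeff j * ((A ^ j).mulVec rkm1) i := by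
      intro i
      have := congrFun hsub i
      simpa [Finset.sum_apply, Pi.smul_apply, smul_eq_mul] using this
    calc ∑ i, (starRingEnd ℂ) (rk i) * (rkm1 i - rk i)
        = ∑ j ∈ Finset.range (m+1),
            (1-p).coeff j * ∑ i, (starRingEnd ℂ) (rk i) * ((A ^ j).mulVec rkm1) i := by
          simp only [h1, Finset.mul_sum]
          rw [Finset.sum_comm]
          exact Finset.sum_congr rfl fun j _ => Finset.sum_congr rfl fun i _ => by ring
      _ = 0 := Finset.sum_eq_zero fun j hj => by
          rcases eq_or_ne j 0 with h | h
          · simp [h, hc0]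
          · rw [hinner_v j (Nat.lt_succ_iff.mp (Finset.mem_range.mp hj)) h, mul_zero]
  have hrknorm : ∑ i, (starRingEnd ℂ) (rk i) * rkm1 i = (enorm' rk : ℂ)^2 := by
    have h2 : ∑ i, (starRingEnd ℂ) (rk i) * rkm1 i
        = ∑ i, (starRingEnd ℂ) (rk i) * rk i := by
      have h3 := hkey
      simp only [mul_sub, Finset.sum_sub_distrib] at h3
      exact sub_eq_zero.mp h3
    rw [h2, ← hip, inner_self_eq_norm_sq_to_K]
    rfl
  funext j
  have hstep : ((krylov m Aᴴ rk)ᴴ.mulVec rkm1) j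
      = ∑ k, (starRingEnd ℂ) (rk k) * ((A ^ (j:ℕ)).mulVec rkm1) k := by
    have hadj := conj_mulVec_sum' (A ^ (j:ℕ)) rk rkm1
    rw [Matrix.conjTranspose_pow] at hadj
    calc ((krylov m Aᴴ rk)ᴴ.mulVec rkm1) j
        = ∑ i, (starRingEnd ℂ) (((Aᴴ ^ (j:ℕ)).mulVec rk) i) * rkm1 i := by
          simp [Matrix.mulVec, dotProduct, Matrix.conjTranspose_apply, krylov,
            Complex.star_def]
      _ = _ := hadj
  rcases eq_or_ne j 0 with hj | hj
  · subst hj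
    rw [hstep]
    simp only [Fin.val_zero, pow_zero, Matrix.one_mulVec, hrknorm, Pi.smul_apply,
      Pi.single_eq_same, smul_eq_mul, mul_one]
  · have hjv : (j:ℕ) ≠ 0 := fun h => hj (Fin.ext h)
    rw [hstep, hinner_v _ (Nat.lt_succ_iff.mp j.isLt) hjv]
    simp [Pi.single_eq_of_ne hj]
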